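/- For every k ≥ j₀, the tail sum satisfies Σ_{j=k+1}^{∞} μ_j ≤ (k+1) μ_{k+1} (1 − 2^{1−ν*})^{−1}. -/

import Mathlib

/-- under (eigup) with `ν* > 1`, for every `k ≥ j₀` the tail sum
satisfies `Σ_{j=k+1}^∞ μ_j ≤ (k+1) μ_{k+1} (1 - 2^(1-ν*))⁻¹` (and in particular
the tail is summable). -/
theorem stmt7 (μ : ℕ → ℝ)
    (hpos : ∀ j, 1 ≤ j → 0 < μ j)
    (hanti : ∀ j, 1 ≤ j → μ (j + 1) ≤ μ j)
    (hlim : Filter.Tendsto μ Filter.atTop (nhds 0))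
    (ν : ℝ) (hν : 1 < ν) (j₀ : ℕ) (hj₀ : 1 ≤ j₀)
    (heigup : ∀ j, 1 ≤ j → j₀ ≤ j → μ (2 * j) ≤ (2 : ℝ) ^ (-ν) * μ j)
    (k : ℕ) (hk : j₀ ≤ k) :
    Summable (fun i : ℕ => μ (k + 1 + i)) ∧
    ∑' i : ℕ, μ (k + 1 + i) ≤ (k + 1 : ℝ) * μ (k + 1) * (1 - (2 : ℝ) ^ (1 - ν))⁻¹ := by
  set q : ℝ := (2 : ℝ) ^ (-ν) with hqdef
  have hq0 : 0 < q := Real.rpow_pos_of_pos two_pos _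
  have hr : (2 : ℝ) ^ (1 - ν) = 2 * q := by
    rw [hqdef, show (1 - ν) = 1 + (-ν) by ring, Real.rpow_add two_pos, Real.rpow_one]
  have hr1 : (2 : ℝ) ^ (1 - ν) < 1 :=
    Real.rpow_lt_one_of_one_lt_of_neg (by norm_num) (by linarith)
  have hr0 : (0 : ℝ) ≤ 2 * q := by positivity
  have hrlt : 2 * q < 1 := hr ▸ hr1
  -- monotonicity of μ on [1, ∞)
  have mono : ∀ a b : ℕ, 1 ≤ a → a ≤ b → μ b ≤ μ a := by
    intro a b ha hab
    obtain ⟨d, rfl⟩ := Nat.exists_eq_add_of_le hab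
    clear hab
    induction d with
    | zero => simp
    | succ n ih =>
      calc μ (a + (n + 1)) = μ ((a + n) + 1) := by rw [add_assoc]
        _ ≤ μ (a + n) := hanti _ (by omega)
        _ ≤ μ a := ih
  -- geometric decay along dyadic points
  have dec : ∀ m : ℕ, μ (2 ^ m * (k + 1)) ≤ q ^ m * μ (k + 1) := by
    intro m
    induction m with
    | zero => simp
    | succ n ih =>
      have hge : k + 1 ≤ 2 ^ n * (k + 1) :=
        Nat.le_mul_of_pos_left _ (Nat.two_pow_pos n)
      have h1 : μ (2 * (2 ^ n * (k + 1))) ≤ q * μ (2 ^ n * (k + 1)) :=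
        heigup _ (by omega) (by omega)
      calc μ (2 ^ (n + 1) * (k + 1)) = μ (2 * (2 ^ n * (k + 1))) := by ring_nf
        _ ≤ q * μ (2 ^ n * (k + 1)) := h1
        _ ≤ q * (q ^ n * μ (k + 1)) := by nlinarith
        _ = q ^ (n + 1) * μ (k + 1) := by ring
  -- block bound
  have block : ∀ m : ℕ,
      ∑ j ∈ Finset.Ico (2 ^ m * (k + 1)) (2 ^ (m + 1) * (k + 1)), μ j
        ≤ ((k + 1 : ℝ)) * μ (k + 1) * (2 * q) ^ m := by
    intro m
    have hc1 : 1 ≤ 2 ^ m * (k + 1) :=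
      Nat.le_mul_of_pos_left _ (Nat.two_pow_pos m) |>.trans' (by omega)
    have hb : ∀ j ∈ Finset.Ico (2 ^ m * (k + 1)) (2 ^ (m + 1) * (k + 1)),
        μ j ≤ μ (2 ^ m * (k + 1)) := by
      intro j hj
      rw [Finset.mem_Ico] at hj
      exact mono _ _ hc1 hj.1
    have hcard : (Finset.Ico (2 ^ m * (k + 1)) (2 ^ (m + 1) * (k + 1))).card
        = 2 ^ m * (k + 1) := by
      rw [Nat.card_Ico]
      ring_nf
      omega
    have h0 := Finset.sum_le_card_nsmul _ _ _ hb
    rw [hcard] at h0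
    calc ∑ j ∈ Finset.Ico (2 ^ m * (k + 1)) (2 ^ (m + 1) * (k + 1)), μ j
        ≤ (2 ^ m * (k + 1) : ℕ) • μ (2 ^ m * (k + 1)) := h0
      _ = ((2 ^ m * (k + 1) : ℕ) : ℝ) * μ (2 ^ m * (k + 1)) := by
          rw [nsmul_eq_mul]
      _ ≤ ((2 ^ m * (k + 1) : ℕ) : ℝ) * (q ^ m * μ (k + 1)) := by
          apply mul_le_mul_of_nonneg_left (dec m) (by positivity)
      _ = ((k + 1 : ℝ)) * μ (k + 1) * (2 * q) ^ m := by
          push_cast; ring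
  -- partial sums over dyadic ranges
  have part : ∀ M : ℕ,
      ∑ j ∈ Finset.Ico (k + 1) (2 ^ M * (k + 1)), μ j
        ≤ ((k + 1 : ℝ)) * μ (k + 1) * ∑ m ∈ Finset.range M, (2 * q) ^ m := by
    intro M
    induction M with
    | zero => simp
    | succ n ih =>
      have h1 : k + 1 ≤ 2 ^ n * (k + 1) := by
        calc k + 1 = 1 * (k + 1) := (one_mul _).symm
          _ ≤ 2 ^ n * (k + 1) := Nat.mul_le_mul_right _ Nat.one_le_two_pow
      have h2 : 2 ^ n * (k + 1) ≤ 2 ^ (n + 1) * (k + 1) :=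
        Nat.mul_le_mul_right _ (Nat.pow_le_pow_right (by norm_num) (by omega))
      calc ∑ j ∈ Finset.Ico (k + 1) (2 ^ (n + 1) * (k + 1)), μ j
          = ∑ j ∈ Finset.Ico (k + 1) (2 ^ n * (k + 1)), μ j
            + ∑ j ∈ Finset.Ico (2 ^ n * (k + 1)) (2 ^ (n + 1) * (k + 1)), μ j :=
            (Finset.sum_Ico_consecutive _ h1 h2).symm
        _ ≤ (k + 1 : ℝ) * μ (k + 1) * ∑ m ∈ Finset.range n, (2 * q) ^ m
            + (k + 1 : ℝ) * μ (k + 1) * (2 * q) ^ n := add_le_add ih (block n)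
        _ = (k + 1 : ℝ) * μ (k + 1) * ∑ m ∈ Finset.range (n + 1), (2 * q) ^ m := by
            rw [Finset.sum_range_succ, mul_add]
  -- geometric sum bound
  have geom : ∀ M : ℕ, ∑ m ∈ Finset.range M, (2 * q) ^ m ≤ (1 - 2 * q)⁻¹ := by
    intro M
    have hs : Summable (fun m : ℕ => (2 * q) ^ m) := summable_geometric_of_lt_one hr0 hrlt
    calc ∑ m ∈ Finset.range M, (2 * q) ^ m
        ≤ ∑' m : ℕ, (2 * q) ^ m := hs.sum_le_tsum _ (fun i _ => by positivity)
      _ = (1 - 2 * q)⁻¹ := tsum_geometric_of_lt_one hr0 hrlt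
  set C : ℝ := ((k + 1 : ℝ)) * μ (k + 1) * (1 - 2 * q)⁻¹ with hC
  have hCμ : 0 < μ (k + 1) := hpos _ (by omega)
  have key : ∀ N : ℕ, ∑ i ∈ Finset.range N, μ (k + 1 + i) ≤ C := by
    intro N
    have hre : ∑ i ∈ Finset.range N, μ (k + 1 + i)
        = ∑ j ∈ Finset.Ico (k + 1) (k + 1 + N), μ j := by
      rw [Finset.sum_Ico_eq_sum_range]
      simp
    have hsub : Finset.Ico (k + 1) (k + 1 + N) ⊆ Finset.Ico (k + 1) (2 ^ N * (k + 1)) := by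
      apply Finset.Ico_subset_Ico_right
      nlinarith [Nat.lt_two_pow_self (n := N)]
    have hnn : ∀ j ∈ Finset.Ico (k + 1) (2 ^ N * (k + 1)), j ∉ Finset.Ico (k + 1) (k + 1 + N) → 0 ≤ μ j := by
      intro j hj _
      rw [Finset.mem_Ico] at hj
      exact (hpos j (by omega)).le
    calc ∑ i ∈ Finset.range N, μ (k + 1 + i)
        = ∑ j ∈ Finset.Ico (k + 1) (k + 1 + N), μ j := hre
      _ ≤ ∑ j ∈ Finset.Ico (k + 1) (2 ^ N * (k + 1)), μ j :=
          Finset.sum_le_sum_of_subset_of_nonneg hsub hnn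
      _ ≤ ((k + 1 : ℝ)) * μ (k + 1) * ∑ m ∈ Finset.range N, (2 * q) ^ m := part N
      _ ≤ C := by
          rw [hC]
          apply mul_le_mul_of_nonneg_left (geom N) (by positivity)
  have hnn' : ∀ i : ℕ, 0 ≤ μ (k + 1 + i) := fun i => (hpos _ (by omega)).le
  have hsum : Summable (fun i : ℕ => μ (k + 1 + i)) :=
    summable_of_sum_range_le hnn' key
  refine ⟨hsum, ?_⟩
  have := hsum.tsum_le_of_sum_range_le key
  rw [hC, hr] at *
  linarith [this]
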